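/- arXiv:1706.01852 — 2 statements merged into one kernel-verified Lean document; each statement's English description precedes it below -/
import Mathlib

section
/- If a seminorm ‖·‖ on ℝ^n is nonincreasing under neighbor averaging (NUNA), then the single-coordinate pooling map iso_i is contractive with respect to ‖·‖: for all x, y ∈ ℝ^n and every i ∈ {1,...,n-1}, ‖iso_i(x) − iso_i(y)‖ ≤ ‖x − y‖. -/
open MeasureTheory Filter ProbabilityTheory

noncomputable section

/-- The isotonic (monotone nondecreasing) cone in `ℝ^n` with the Euclidean norm. -/
def monoCone (n : ℕ) : Set (EuclideanSpace ℝ (Fin n)) :=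
  {v | ∀ i j : Fin n, i ≤ j → v i ≤ v j}

open Classical in
/-- Euclidean projection onto the monotone cone (chosen minimizer of the distance). -/
def isoProj {n : ℕ} (x : EuclideanSpace ℝ (Fin n)) : EuclideanSpace ℝ (Fin n) :=
  if h : ∃ z ∈ monoCone n, ∀ w ∈ monoCone n, dist x z ≤ dist x w then h.choose else x

/-- The map `A_i` replacing entries `i` and `i+1` (0-based) by their common average. -/
def avgMap {n : ℕ} (i : ℕ) (x : EuclideanSpace ℝ (Fin n)) : EuclideanSpace ℝ (Fin n) :=
  WithLp.toLp 2 fun j => if h : i + 1 < n then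
      (if (j : ℕ) = i ∨ (j : ℕ) = i + 1
        then (x ⟨i, by omega⟩ + x ⟨i + 1, h⟩) / 2 else x j)
    else x j

/-- One step of neighbor pooling: average entries `i`, `i+1` if they violate monotonicity. -/
def isoStep {n : ℕ} (i : ℕ) (x : EuclideanSpace ℝ (Fin n)) : EuclideanSpace ℝ (Fin n) :=
  if h : i + 1 < n then
    (if x ⟨i, by omega⟩ ≤ x ⟨i + 1, h⟩ then x else avgMap i x)
  else x

/-- Nonincreasing under neighbor averaging. -/
def NUNA {n : ℕ} (N : Seminorm ℝ (EuclideanSpace ℝ (Fin n))) : Prop :=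
  ∀ x : EuclideanSpace ℝ (Fin n), ∀ i : ℕ, i + 1 < n → N (avgMap i x) ≤ N x

/-- Average of the `m` entries of `x` starting at (0-based) index `a`. -/
def wavg {n : ℕ} (x : EuclideanSpace ℝ (Fin n)) (a m : ℕ) : ℝ :=
  (∑ t ∈ Finset.range m, if h : a + t < n then x ⟨a + t, h⟩ else 0) / m

/-- The sliding window seminorm with weight function `ψ`. -/
def swNorm {n : ℕ} (ψ : ℕ → ℝ) (x : EuclideanSpace ℝ (Fin n)) : ℝ :=
  sSup {r | ∃ a m : ℕ, 1 ≤ m ∧ a + m ≤ n ∧ r = |wavg x a m| * ψ m}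


lemma avgMap_sub' {n : ℕ} (i : ℕ) (x y : EuclideanSpace ℝ (Fin n)) :
    avgMap i (x - y) = avgMap i x - avgMap i y := by
  ext j
  simp only [avgMap, PiLp.sub_apply, PiLp.toLp_apply]
  split
  · split <;> ring
  · rfl

lemma mixed' {n : ℕ} (N : Seminorm ℝ (EuclideanSpace ℝ (Fin n))) (hN : NUNA N)
    (x y : EuclideanSpace ℝ (Fin n)) (i : ℕ) (h : i + 1 < n)
    (hx : x ⟨i + 1, h⟩ < x ⟨i, by omega⟩) (hy : y ⟨i, by omega⟩ ≤ y ⟨i + 1, h⟩) :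
    N (avgMap i x - y) ≤ N (x - y) := by
  set a := x ⟨i, by omega⟩ with ha
  set b := x ⟨i + 1, h⟩ with hb
  set c := y ⟨i, by omega⟩ with hc
  set d := y ⟨i + 1, h⟩ with hd
  set S : ℝ := (a - b) + (d - c) with hS
  have hSpos : 0 < S := by
    have h1 : 0 < a - b := by linarith
    have h2 : 0 ≤ d - c := by linarith
    linarith
  set l : ℝ := (d - c) / S with hl
  set m : ℝ := (a - b) / S with hm
  have hl0 : 0 ≤ l := div_nonneg (by linarith) hSpos.le
  have hm0 : 0 ≤ m := div_nonneg (by linarith) hSpos.le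
  have hlm : l + m = 1 := by
    rw [hl, hm, ← add_div, div_eq_one_iff_eq hSpos.ne', hS]
    ring
  have key : avgMap i x - y = l • (x - y) + m • (avgMap i (x - y)) := by
    ext j
    simp only [avgMap, PiLp.sub_apply, PiLp.add_apply, PiLp.smul_apply, smul_eq_mul, PiLp.toLp_apply]
    rw [dif_pos h, dif_pos h]
    split
    · rw [← ha, ← hb, ← hc, ← hd]
      rcases ‹(j : ℕ) = i ∨ (j : ℕ) = i + 1› with hj | hj
      · have hjc : y j = c := by rw [hc]; exact congrArg _ (Fin.ext hj)
        have hja : x j = a := by rw [ha]; exact congrArg _ (Fin.ext hj)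
        rw [hjc, hja, hl, hm]
        field_simp
        ring
      · have hjd : y j = d := by rw [hd]; exact congrArg _ (Fin.ext hj)
        have hjb : x j = b := by rw [hb]; exact congrArg _ (Fin.ext hj)
        rw [hjd, hjb, hl, hm]
        field_simp
        ring
    · have hrw : l * (x j - y j) + m * (x j - y j) = (l + m) * (x j - y j) := by ring
      rw [hrw, hlm]; ring
  calc N (avgMap i x - y) = N (l • (x - y) + m • (avgMap i (x - y))) := by rw [key]
    _ ≤ N (l • (x - y)) + N (m • (avgMap i (x - y))) := map_add_le_add N _ _
    _ = l * N (x - y) + m * N (avgMap i (x - y)) := by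
        rw [map_smul_eq_mul, map_smul_eq_mul, Real.norm_eq_abs, Real.norm_eq_abs,
          abs_of_nonneg hl0, abs_of_nonneg hm0]
    _ ≤ l * N (x - y) + m * N (x - y) := by
        gcongr
        exact hN (x - y) i h
    _ = N (x - y) := by rw [← add_mul, hlm, one_mul]

theorem stmt2 (n : ℕ) (N : Seminorm ℝ (EuclideanSpace ℝ (Fin n))) (hN : NUNA N) :
    ∀ (x y : EuclideanSpace ℝ (Fin n)) (i : ℕ), i + 1 < n →
      N (isoStep i x - isoStep i y) ≤ N (x - y) := by
  intro x y i h
  simp only [isoStep, dif_pos h]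
  by_cases hx : x ⟨i, by omega⟩ ≤ x ⟨i + 1, h⟩ <;>
    by_cases hy : y ⟨i, by omega⟩ ≤ y ⟨i + 1, h⟩ <;>
      simp only [hx, hy, if_true, if_false, if_pos, if_neg, not_false_iff]
  · exact le_refl _
  · have := mixed' N hN y x i h (lt_of_not_ge hy) hx
    calc N (x - avgMap i y) = N (-(avgMap i y - x)) := by rw [neg_sub]
      _ = N (avgMap i y - x) := map_neg_eq_map N _
      _ ≤ N (y - x) := this
      _ = N (-(x - y)) := by rw [neg_sub]
      _ = N (x - y) := map_neg_eq_map N _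
  · exact mixed' N hN x y i h (lt_of_not_ge hx) hy
  · rw [← avgMap_sub']
    exact hN (x - y) i h
end
end

section
/- For any x ∈ ℝ^n and any i ∈ {1,...,n-1}, iso(iso_i(x)) = iso(x); that is, applying one step of neighbor-pooling to a pair of adjacent coordinates that violate monotonicity does not change the isotonic projection. -/
open MeasureTheory Filter ProbabilityTheory

noncomputable section
open RealInnerProductSpace

lemma monoCone_convex (n : ℕ) : Convex ℝ (monoCone n) := by
  intro u hu v hv a b ha hb hab i j hij
  have h1 := hu i j hij
  have h2 := hv i j hij
  simp only [PiLp.add_apply, PiLp.smul_apply, smul_eq_mul]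
  nlinarith

lemma monoCone_closed (n : ℕ) : IsClosed (monoCone n) := by
  have : monoCone n = ⋂ (i : Fin n) (j : Fin n) (_ : i ≤ j),
      {v : EuclideanSpace ℝ (Fin n) | v i ≤ v j} := by
    ext v; simp [monoCone, Set.mem_iInter]
  rw [this]
  exact isClosed_iInter fun i => isClosed_iInter fun j => isClosed_iInter fun _ =>
    isClosed_le (EuclideanSpace.proj i).continuous (EuclideanSpace.proj j).continuous

lemma monoCone_nonempty (n : ℕ) : (monoCone n).Nonempty :=
  ⟨0, fun i j _ => le_refl _⟩

set_option maxHeartbeats 1000000 in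
lemma exists_min {n : ℕ} (x : EuclideanSpace ℝ (Fin n)) :
    ∃ z ∈ monoCone n, ∀ w ∈ monoCone n, dist x z ≤ dist x w := by
  obtain ⟨z, hz, hmin⟩ := exists_norm_eq_iInf_of_complete_convex (monoCone_nonempty n)
    (monoCone_closed n).isComplete (monoCone_convex n) x
  haveI : Nonempty (monoCone n) := ⟨⟨z, hz⟩⟩
  refine ⟨z, hz, fun w hw => ?_⟩
  rw [dist_eq_norm, dist_eq_norm, hmin]
  have hb : BddBelow (Set.range fun w : monoCone n => ‖x - w‖) := by
    refine ⟨0, ?_⟩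
    rintro r ⟨v, rfl⟩
    exact norm_nonneg _
  exact ciInf_le hb (⟨w, hw⟩ : monoCone n)

lemma min_inner {n : ℕ} {x z : EuclideanSpace ℝ (Fin n)} (hz : z ∈ monoCone n)
    (hmin : ∀ w ∈ monoCone n, dist x z ≤ dist x w) :
    ∀ w ∈ monoCone n, ⟪x - z, w - z⟫ ≤ 0 := by
  haveI : Nonempty (monoCone n) := ⟨⟨z, hz⟩⟩
  have h : ‖x - z‖ = ⨅ w : monoCone n, ‖x - w‖ := by
    apply le_antisymm
    · exact le_ciInf fun w => by
        simpa [dist_eq_norm] using hmin w w.2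
    · have hb : BddBelow (Set.range fun w : monoCone n => ‖x - w‖) := by
        · refine ⟨0, ?_⟩
          rintro r ⟨v, rfl⟩
          exact norm_nonneg _
      exact ciInf_le hb (⟨z, hz⟩ : monoCone n)
  exact (norm_eq_iInf_iff_real_inner_le_zero (monoCone_convex n) hz).mp h

lemma min_unique {n : ℕ} {x z z' : EuclideanSpace ℝ (Fin n)} (hz : z ∈ monoCone n)
    (hz' : z' ∈ monoCone n)
    (hmin : ∀ w ∈ monoCone n, dist x z ≤ dist x w)
    (hmin' : ∀ w ∈ monoCone n, dist x z' ≤ dist x w) : z = z' := by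
  have h1 := min_inner hz hmin z' hz'
  have h2 := min_inner hz' hmin' z hz
  have h3 : ⟪x - z', z - z'⟫ = - ⟪x - z', z' - z⟫ := by
    rw [← inner_neg_right]; congr 1; abel
  have h4 : ⟪(x - z) - (x - z'), z' - z⟫ = ⟪z' - z, z' - z⟫ := by
    congr 1; abel
  rw [inner_sub_left] at h4
  have h5 : ⟪z' - z, z' - z⟫ ≤ 0 := by
    rw [← h4]; linarith
  have h6 : z' - z = 0 := by
    have := real_inner_self_nonneg (x := z' - z)
    have : ⟪z' - z, z' - z⟫ = 0 := le_antisymm h5 this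
    exact inner_self_eq_zero.mp this
  have := sub_eq_zero.mp h6
  exact this.symm

lemma min_coord_eq {n : ℕ} {x z : EuclideanSpace ℝ (Fin n)} {i : ℕ} (hi : i + 1 < n)
    (hx : x ⟨i + 1, hi⟩ ≤ x ⟨i, by omega⟩)
    (hz : z ∈ monoCone n) (hmin : ∀ w ∈ monoCone n, dist x z ≤ dist x w) :
    z ⟨i, by omega⟩ = z ⟨i + 1, hi⟩ := by
  set i0 : Fin n := ⟨i, by omega⟩ with hi0
  set i1 : Fin n := ⟨i + 1, hi⟩ with hi1
  have hle : z i0 ≤ z i1 := hz i0 i1 (by simp [hi0, hi1, Fin.le_def])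
  by_contra hne
  have hlt : z i0 < z i1 := lt_of_le_of_ne hle hne
  have hεpos : (0:ℝ) < z i1 - z i0 := by linarith
  have hne01 : i0 ≠ i1 := by simp [hi0, hi1, Fin.ext_iff]
  have key : ∀ k : Fin n, i0 ≤ k → k ≠ i0 → i1 ≤ k := by
    intro k h1 h2
    rw [Fin.le_def] at h1 ⊢
    have : (k : ℕ) ≠ (i0 : ℕ) := fun hc => h2 (Fin.ext hc)
    simp only [hi0, hi1] at *
    omega
  have key' : ∀ j : Fin n, j ≤ i1 → j ≠ i1 → j ≤ i0 := by
    intro j h1 h2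
    rw [Fin.le_def] at h1 ⊢
    have : (j : ℕ) ≠ (i1 : ℕ) := fun hc => h2 (Fin.ext hc)
    simp only [hi0, hi1] at *
    omega
  -- first perturbation: bump coordinate i0 up
  have hw1 : z + EuclideanSpace.single i0 (z i1 - z i0) ∈ monoCone n := by
    intro j k hjk
    simp only [PiLp.add_apply, EuclideanSpace.single_apply]
    by_cases hj : j = i0 <;> by_cases hk : k = i0
    · rw [hj, hk]
    · have h1 := hz i1 k (key k (hj ▸ hjk) hk)
      rw [hj, if_pos rfl, if_neg hk]
      linarith
    · have h1 := hz j i0 (hk ▸ hjk)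
      rw [hk, if_pos rfl, if_neg hj]
      linarith
    · rw [if_neg hj, if_neg hk]
      simpa using hz j k hjk
  -- second perturbation: bump coordinate i1 down
  have hw2 : z - EuclideanSpace.single i1 (z i1 - z i0) ∈ monoCone n := by
    intro j k hjk
    simp only [PiLp.sub_apply, EuclideanSpace.single_apply]
    by_cases hj : j = i1 <;> by_cases hk : k = i1
    · rw [hj, hk]
    · have h1 := hz i1 k (hj ▸ hjk)
      rw [hj, if_pos rfl, if_neg hk]
      linarith
    · have h1 := hz j i0 (key' j (hk ▸ hjk) hj)
      rw [hk, if_pos rfl, if_neg hj]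
      linarith
    · rw [if_neg hj, if_neg hk]
      simpa using hz j k hjk
  have h1 := min_inner hz hmin _ hw1
  have h2 := min_inner hz hmin _ hw2
  have e1 : (z + EuclideanSpace.single i0 (z i1 - z i0)) - z
      = EuclideanSpace.single i0 (z i1 - z i0) := by abel
  have e2 : (z - EuclideanSpace.single i1 (z i1 - z i0)) - z
      = EuclideanSpace.single i1 (-(z i1 - z i0)) := by
    have : EuclideanSpace.single i1 (-(z i1 - z i0))
        = -EuclideanSpace.single i1 (z i1 - z i0) := by
      ext j
      by_cases h : j = i1 <;> simp [EuclideanSpace.single_apply, h]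
    rw [this]; abel
  rw [e1, EuclideanSpace.inner_single_right] at h1
  rw [e2, EuclideanSpace.inner_single_right] at h2
  simp only [RCLike.conj_to_real, PiLp.sub_apply] at h1 h2
  have hx0 : x i0 ≤ z i0 := by nlinarith
  have hx1 : z i1 ≤ x i1 := by nlinarith
  have : z i1 ≤ z i0 := le_trans hx1 (le_trans hx hx0)
  linarith

lemma dist_sq_eq {n : ℕ} (x w : EuclideanSpace ℝ (Fin n)) :
    dist x w ^ 2 = ∑ j, (x j - w j) ^ 2 := by
  rw [EuclideanSpace.dist_eq, Real.sq_sqrt (by positivity)]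
  exact Finset.sum_congr rfl fun j _ => by rw [Real.dist_eq, sq_abs]

lemma avgMap_apply_ne {n : ℕ} {i : ℕ} (hi : i + 1 < n) (x : EuclideanSpace ℝ (Fin n))
    {j : Fin n} (h0 : (j : ℕ) ≠ i) (h1 : (j : ℕ) ≠ i + 1) : avgMap i x j = x j := by
  simp [avgMap, hi, h0, h1]

lemma avgMap_apply_i0 {n : ℕ} {i : ℕ} (hi : i + 1 < n) (x : EuclideanSpace ℝ (Fin n)) :
    avgMap i x ⟨i, by omega⟩ = (x ⟨i, by omega⟩ + x ⟨i + 1, hi⟩) / 2 := by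
  simp [avgMap, hi]

lemma avgMap_apply_i1 {n : ℕ} {i : ℕ} (hi : i + 1 < n) (x : EuclideanSpace ℝ (Fin n)) :
    avgMap i x ⟨i + 1, hi⟩ = (x ⟨i, by omega⟩ + x ⟨i + 1, hi⟩) / 2 := by
  simp [avgMap, hi]

lemma avg_dist_identity {n : ℕ} {i : ℕ} (hi : i + 1 < n)
    (x w : EuclideanSpace ℝ (Fin n)) :
    dist x w ^ 2 = dist (avgMap i x) w ^ 2
      + (x ⟨i, by omega⟩ - x ⟨i + 1, hi⟩) ^ 2 / 2
      + (x ⟨i, by omega⟩ - x ⟨i + 1, hi⟩) * (w ⟨i + 1, hi⟩ - w ⟨i, by omega⟩) := by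
  set i0 : Fin n := ⟨i, by omega⟩ with hi0
  set i1 : Fin n := ⟨i + 1, hi⟩ with hi1
  have hne01 : i0 ≠ i1 := by simp [hi0, hi1, Fin.ext_iff]
  rw [dist_sq_eq, dist_sq_eq]
  have hsplit : ∀ f : Fin n → ℝ,
      ∑ j, f j = (∑ j ∈ Finset.univ \ {i0, i1}, f j) + (f i0 + f i1) := by
    intro f
    rw [← Finset.sum_pair hne01]
    exact (Finset.sum_sdiff (Finset.subset_univ {i0, i1})).symm
  rw [hsplit (fun j => (x j - w j) ^ 2), hsplit (fun j => (avgMap i x j - w j) ^ 2)]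
  have hrest : ∑ j ∈ Finset.univ \ {i0, i1}, (x j - w j) ^ 2
      = ∑ j ∈ Finset.univ \ {i0, i1}, (avgMap i x j - w j) ^ 2 := by
    refine Finset.sum_congr rfl fun j hj => ?_
    simp only [Finset.mem_sdiff, Finset.mem_insert, Finset.mem_singleton] at hj
    have h0 : (j : ℕ) ≠ i := fun hc => hj.2 (Or.inl (by simp [hi0, Fin.ext_iff, hc]))
    have h1 : (j : ℕ) ≠ i + 1 := fun hc => hj.2 (Or.inr (by simp [hi1, Fin.ext_iff, hc]))
    rw [avgMap_apply_ne hi x h0 h1]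
  rw [hrest, avgMap_apply_i0 hi, avgMap_apply_i1 hi]
  ring

theorem stmt5 (n : ℕ) (x : EuclideanSpace ℝ (Fin n)) (i : ℕ) (hi : i + 1 < n) :
    isoProj (isoStep i x) = isoProj x := by
  by_cases hx : x ⟨i, by omega⟩ ≤ x ⟨i + 1, hi⟩
  · have h : isoStep i x = x := by rw [isoStep, dif_pos hi, if_pos hx]
    rw [h]
  · have hstep : isoStep i x = avgMap i x := by rw [isoStep, dif_pos hi, if_neg hx]
    have hex : ∃ z ∈ monoCone n, ∀ w ∈ monoCone n, dist x z ≤ dist x w := exists_min x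
    have hey : ∃ z ∈ monoCone n, ∀ w ∈ monoCone n,
        dist (avgMap i x) z ≤ dist (avgMap i x) w := exists_min (avgMap i x)
    rw [hstep, isoProj, isoProj, dif_pos hey, dif_pos hex]
    obtain ⟨hzK, hzmin⟩ := hex.choose_spec
    obtain ⟨hz'K, hz'min⟩ := hey.choose_spec
    set z := hex.choose with hzdef
    set z' := hey.choose with hz'def
    set i0 : Fin n := ⟨i, by omega⟩ with hi0
    set i1 : Fin n := ⟨i + 1, hi⟩ with hi1
    have hba : x i1 ≤ x i0 := le_of_not_ge hx
    have hgz : z i0 = z i1 := min_coord_eq hi hba hzK hzmin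
    have hyi : avgMap i x i1 ≤ avgMap i x i0 := by
      rw [hi0, hi1, avgMap_apply_i0 hi, avgMap_apply_i1 hi]
    have hgz' : z' i0 = z' i1 := min_coord_eq hi hyi hz'K hz'min
    have E1 := avg_dist_identity hi x z
    have E2 := avg_dist_identity hi x z'
    have c1 : dist x z ≤ dist x z' := hzmin z' hz'K
    have c2 : dist (avgMap i x) z' ≤ dist (avgMap i x) z := hz'min z hzK
    have sq1 : dist x z ^ 2 ≤ dist x z' ^ 2 := pow_le_pow_left₀ dist_nonneg c1 2
    have sq2 : dist (avgMap i x) z' ^ 2 ≤ dist (avgMap i x) z ^ 2 :=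
      pow_le_pow_left₀ dist_nonneg c2 2
    have eq1 : dist x z ^ 2 = dist (avgMap i x) z ^ 2 + (x i0 - x i1) ^ 2 / 2 := by
      rw [E1]
      rw [show z ⟨i + 1, hi⟩ = z i1 from rfl, show z ⟨i, by omega⟩ = z i0 from rfl, hgz]
      ring
    have eq2 : dist x z' ^ 2 = dist (avgMap i x) z' ^ 2 + (x i0 - x i1) ^ 2 / 2 := by
      rw [E2]
      rw [show z' ⟨i + 1, hi⟩ = z' i1 from rfl, show z' ⟨i, by omega⟩ = z' i0 from rfl, hgz']
      ring
    have heq : dist (avgMap i x) z ^ 2 = dist (avgMap i x) z' ^ 2 :=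
      le_antisymm (by linarith) sq2
    have heqd : dist (avgMap i x) z = dist (avgMap i x) z' := by
      calc dist (avgMap i x) z = Real.sqrt (dist (avgMap i x) z ^ 2) :=
            (Real.sqrt_sq dist_nonneg).symm
        _ = Real.sqrt (dist (avgMap i x) z' ^ 2) := by rw [heq]
        _ = dist (avgMap i x) z' := Real.sqrt_sq dist_nonneg
    have hzminy : ∀ w ∈ monoCone n, dist (avgMap i x) z ≤ dist (avgMap i x) w :=
      fun w hw => heqd.le.trans (hz'min w hw)
    exact min_unique hz'K hzK hz'min hzminy
end
end
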